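/- The 6-girth-thickness of the complete graph K_{10} equals 4, i.e., θ(6, K_{10}) = 4; in particular, K_{10} is the union of 4 planar subgraphs each of girth at least 6. -/

import Mathlib

/-- A simple graph is *planar* if it can be drawn in the Euclidean plane: vertices are
distinct points, each edge is drawn as an injective arc between the images of its
endpoints, and no interior point of an arc is the image of a vertex or lies on the arc
of a different edge. -/
def SimpleGraph.IsPlanar {V : Type*} (G : SimpleGraph V) : Prop :=
  ∃ (f : V → ℝ × ℝ) (γ : ∀ u v, G.Adj u v → _root_.Path (f u) (f v)),
    Function.Injective f ∧
    (∀ u v (h : G.Adj u v), Function.Injective (γ u v h)) ∧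
    (∀ u v (h : G.Adj u v) (t : unitInterval), t ≠ 0 → t ≠ 1 → ∀ w, γ u v h t ≠ f w) ∧
    (∀ u v (h : G.Adj u v) (u' v' : V) (h' : G.Adj u' v'), s(u, v) ≠ s(u', v') →
      ∀ (s t : unitInterval), s ≠ 0 → s ≠ 1 → t ≠ 0 → t ≠ 1 →
        γ u v h s ≠ γ u' v' h' t)

/-- The `g`-girth-thickness `θ(g, G)` of a graph `G`: the minimum number of planar
subgraphs, each of girth at least `g`, whose union is `G`. -/
noncomputable def girthThickness {V : Type*} (g : ℕ∞) (G : SimpleGraph V) : ℕ :=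
  sInf {m : ℕ | ∃ H : Fin m → SimpleGraph V,
    (∀ i, (H i).IsPlanar) ∧ (∀ i, g ≤ (H i).egirth) ∧ (⨆ i, H i) = G}

open SimpleGraph Finset


noncomputable def seg (A B : ℝ × ℝ) : Path A B where
  toFun := fun t => (A.1 + t.1 * (B.1 - A.1), A.2 + t.1 * (B.2 - A.2))
  continuous_toFun := by fun_prop
  source' := by simp
  target' := by simp

lemma seg_inj {A B : ℝ × ℝ} (h : A ≠ B) : Function.Injective (seg A B) := by
  intro s t hst
  have h1 : A.1 + s.1 * (B.1 - A.1) = A.1 + t.1 * (B.1 - A.1) := congrArg Prod.fst hst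
  have h2 : A.2 + s.1 * (B.2 - A.2) = A.2 + t.1 * (B.2 - A.2) := congrArg Prod.snd hst
  have : B.1 - A.1 ≠ 0 ∨ B.2 - A.2 ≠ 0 := by
    by_contra hc
    push_neg at hc
    exact h (Prod.ext (by linarith [hc.1]) (by linarith [hc.2])).symm
  have hv : s.1 = t.1 := by
    rcases this with hx | hy
    · have := mul_right_cancel₀ hx (by linarith : s.1 * (B.1 - A.1) = t.1 * (B.1 - A.1))
      exact this
    · have := mul_right_cancel₀ hy (by linarith : s.1 * (B.2 - A.2) = t.1 * (B.2 - A.2))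
      exact this
  exact Subtype.ext hv

def SegDisj (A B C D : ℝ × ℝ) : Prop :=
  ∀ (s t : unitInterval), s ≠ 0 → s ≠ 1 → t ≠ 0 → t ≠ 1 → seg A B s ≠ seg C D t

lemma unitInterval_pos {s : unitInterval} (h : s ≠ 0) : 0 < s.1 :=
  lt_of_le_of_ne s.2.1 (fun he => h (Subtype.ext he.symm))

lemma unitInterval_lt_one {s : unitInterval} (h : s ≠ 1) : s.1 < 1 :=
  lt_of_le_of_ne s.2.2 (fun he => h (Subtype.ext he))

lemma seg_disj {A B C D : ℝ × ℝ} (a b c : ℝ)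
    (hA : a * A.1 + b * A.2 ≤ c) (hB : a * B.1 + b * B.2 ≤ c)
    (hC : c ≤ a * C.1 + b * C.2) (hD : c ≤ a * D.1 + b * D.2)
    (hs : a * A.1 + b * A.2 < c ∨ a * B.1 + b * B.2 < c ∨
          c < a * C.1 + b * C.2 ∨ c < a * D.1 + b * D.2) :
    SegDisj A B C D := by
  intro s t hs0 hs1 ht0 ht1 heq
  have hsp : 0 < s.1 := unitInterval_pos hs0
  have hsl : s.1 < 1 := unitInterval_lt_one hs1
  have htp : 0 < t.1 := unitInterval_pos ht0
  have htl : t.1 < 1 := unitInterval_lt_one ht1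
  have h1 : A.1 + s.1 * (B.1 - A.1) = C.1 + t.1 * (D.1 - C.1) := congrArg Prod.fst heq
  have h2 : A.2 + s.1 * (B.2 - A.2) = C.2 + t.1 * (D.2 - C.2) := congrArg Prod.snd heq
  -- L value at the common point
  have key : (1 - s.1) * (a * A.1 + b * A.2) + s.1 * (a * B.1 + b * B.2)
      = (1 - t.1) * (a * C.1 + b * C.2) + t.1 * (a * D.1 + b * D.2) := by linear_combination a * h1 + b * h2
  rcases hs with h | h | h | h
  · nlinarith [mul_pos (sub_pos.mpr hsl) (sub_pos.mpr h), mul_nonneg (le_of_lt hsp) (sub_nonneg.mpr hB), mul_nonneg (le_of_lt (sub_pos.mpr htl)) (sub_nonneg.mpr hC), mul_nonneg (le_of_lt htp) (sub_nonneg.mpr hD)]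
  · nlinarith [mul_pos hsp (sub_pos.mpr h), mul_nonneg (le_of_lt (sub_pos.mpr hsl)) (sub_nonneg.mpr hA), mul_nonneg (le_of_lt (sub_pos.mpr htl)) (sub_nonneg.mpr hC), mul_nonneg (le_of_lt htp) (sub_nonneg.mpr hD)]
  · nlinarith [mul_pos (sub_pos.mpr htl) (sub_pos.mpr h), mul_nonneg (le_of_lt htp) (sub_nonneg.mpr hD), mul_nonneg (le_of_lt (sub_pos.mpr hsl)) (sub_nonneg.mpr hA), mul_nonneg (le_of_lt hsp) (sub_nonneg.mpr hB)]
  · nlinarith [mul_pos htp (sub_pos.mpr h), mul_nonneg (le_of_lt (sub_pos.mpr htl)) (sub_nonneg.mpr hC), mul_nonneg (le_of_lt (sub_pos.mpr hsl)) (sub_nonneg.mpr hA), mul_nonneg (le_of_lt hsp) (sub_nonneg.mpr hB)]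

lemma seg_avoid {A B W : ℝ × ℝ} (a b : ℝ)
    (hdir : a * (B.1 - A.1) + b * (B.2 - A.2) = 0)
    (hW : a * W.1 + b * W.2 ≠ a * A.1 + b * A.2) :
    ∀ t : unitInterval, seg A B t ≠ W := by
  intro t h
  apply hW
  have h1 : A.1 + t.1 * (B.1 - A.1) = W.1 := congrArg Prod.fst h
  have h2 : A.2 + t.1 * (B.2 - A.2) = W.2 := congrArg Prod.snd h
  linear_combination (-a) * h1 + (-b) * h2 + (t.1 : ℝ) * hdir

def crit (abc : ℤ × ℤ × ℤ) (A B C D : ℤ × ℤ) : Prop :=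
  abc.1 * A.1 + abc.2.1 * A.2 ≤ abc.2.2 ∧ abc.1 * B.1 + abc.2.1 * B.2 ≤ abc.2.2 ∧
  abc.2.2 ≤ abc.1 * C.1 + abc.2.1 * C.2 ∧ abc.2.2 ≤ abc.1 * D.1 + abc.2.1 * D.2 ∧
  (abc.1 * A.1 + abc.2.1 * A.2 < abc.2.2 ∨ abc.1 * B.1 + abc.2.1 * B.2 < abc.2.2 ∨
   abc.2.2 < abc.1 * C.1 + abc.2.1 * C.2 ∨ abc.2.2 < abc.1 * D.1 + abc.2.1 * D.2)

instance critDec (abc : ℤ × ℤ × ℤ) (A B C D : ℤ × ℤ) : Decidable (crit abc A B C D) := by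
  unfold crit; infer_instance

lemma segDisj_of_crit {abc : ℤ × ℤ × ℤ} {A B C D : ℤ × ℤ} (h : crit abc A B C D) :
    SegDisj ((A.1 : ℝ), (A.2 : ℝ)) ((B.1 : ℝ), (B.2 : ℝ))
      ((C.1 : ℝ), (C.2 : ℝ)) ((D.1 : ℝ), (D.2 : ℝ)) := by
  obtain ⟨h1, h2, h3, h4, h5⟩ := h
  refine seg_disj (abc.1 : ℝ) (abc.2.1 : ℝ) (abc.2.2 : ℝ) ?_ ?_ ?_ ?_ ?_
  · dsimp only; exact_mod_cast h1
  · dsimp only; exact_mod_cast h2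
  · dsimp only; exact_mod_cast h3
  · dsimp only; exact_mod_cast h4
  · dsimp only; exact_mod_cast h5

lemma avoid_int (u v w : ℤ × ℤ)
    (h : (v.1 - u.1) * (w.2 - u.2) - (v.2 - u.2) * (w.1 - u.1) ≠ 0) :
    ∀ t : unitInterval,
      seg ((u.1 : ℝ), (u.2 : ℝ)) ((v.1 : ℝ), (v.2 : ℝ)) t ≠ ((w.1 : ℝ), (w.2 : ℝ)) := by
  apply seg_avoid (a := -((v.2 : ℝ) - (u.2 : ℝ))) (b := ((v.1 : ℝ) - (u.1 : ℝ)))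
  · dsimp only; ring
  · dsimp only
    intro hc
    apply h
    have hr : ((v.1 - u.1) * (w.2 - u.2) - (v.2 - u.2) * (w.1 - u.1) : ℝ) = 0 := by
      push_cast
      linear_combination hc
    exact_mod_cast hr

lemma seg_ne_src {A B : ℝ × ℝ} (hAB : A ≠ B) {t : unitInterval} (ht : t ≠ 0) :
    seg A B t ≠ A :=
  fun he => ht (seg_inj hAB (he.trans (seg A B).source.symm))

lemma seg_ne_tgt {A B : ℝ × ℝ} (hAB : A ≠ B) {t : unitInterval} (ht : t ≠ 1) :
    seg A B t ≠ B :=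
  fun he => ht (seg_inj hAB (he.trans (seg A B).target.symm))

lemma inj_cast {g : Fin 10 → ℤ × ℤ} (hg : Function.Injective g) :
    Function.Injective (fun i => (((g i).1 : ℝ), ((g i).2 : ℝ))) := by
  intro i j h
  apply hg
  have h1 : ((g i).1 : ℝ) = ((g j).1 : ℝ) := congrArg Prod.fst h
  have h2 : ((g i).2 : ℝ) = ((g j).2 : ℝ) := congrArg Prod.snd h
  exact Prod.ext (by exact_mod_cast h1) (by exact_mod_cast h2)

def coefLookup (tbl : List (((Fin 10 × Fin 10) × (Fin 10 × Fin 10)) × (ℤ × ℤ × ℤ)))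
    (u v u' v' : Fin 10) : ℤ × ℤ × ℤ :=
  let e := if u ≤ v then (u, v) else (v, u)
  let e' := if u' ≤ v' then (u', v') else (v', u')
  if 10 * e.1.val + e.2.val ≤ 10 * e'.1.val + e'.2.val then
    (tbl.lookup (e, e')).getD (0, 0, 0)
  else
    match (tbl.lookup (e', e)).getD (0, 0, 0) with
    | (a, b, c) => (-a, -b, -c)


open SimpleGraph

variable {V : Type*} {G : SimpleGraph V}

lemma walk_len3 {u v : V} (w : G.Walk u v) (h : w.length = 3) :
    ∃ x y, G.Adj u x ∧ G.Adj x y ∧ G.Adj y v ∧ w.support = [u, x, y, v] := by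
  cases w with
  | nil => simp at h
  | @cons _ x _ h1 w1 => cases w1 with
    | nil => simp at h
    | @cons _ y _ h2 w2 => cases w2 with
      | nil => simp at h
      | @cons _ z _ h3 w3 => cases w3 with
        | nil =>
          simp at h
          exact ⟨x, y, h1, h2, h3, by simp⟩
        | cons h4 w4 => simp only [SimpleGraph.Walk.length_cons] at h; omega

lemma walk_len4 {u v : V} (w : G.Walk u v) (h : w.length = 4) :
    ∃ x y z, G.Adj u x ∧ G.Adj x y ∧ G.Adj y z ∧ G.Adj z v ∧ w.support = [u, x, y, z, v] := by
  cases w with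
  | nil => simp at h
  | @cons _ x _ h1 w1 =>
    have h1' : w1.length = 3 := by simp [SimpleGraph.Walk.length_cons] at h; omega
    obtain ⟨y, z, a1, a2, a3, hs⟩ := walk_len3 w1 h1'
    exact ⟨x, y, z, h1, a1, a2, a3, by simp [hs]⟩

lemma walk_len5 {u v : V} (w : G.Walk u v) (h : w.length = 5) :
    ∃ x y z p, G.Adj u x ∧ G.Adj x y ∧ G.Adj y z ∧ G.Adj z p ∧ G.Adj p v ∧
      w.support = [u, x, y, z, p, v] := by
  cases w with
  | nil => simp at h
  | @cons _ x _ h1 w1 =>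
    have h1' : w1.length = 4 := by simp [SimpleGraph.Walk.length_cons] at h; omega
    obtain ⟨y, z, p, a1, a2, a3, a4, hs⟩ := walk_len4 w1 h1'
    exact ⟨x, y, z, p, h1, a1, a2, a3, a4, by simp [hs]⟩

lemma egirth_ge_six
    (h3 : ∀ a b : V, G.Adj a b → ∀ c, G.Adj b c → G.Adj c a → False)
    (h4 : ∀ a b : V, G.Adj a b → ∀ c, G.Adj b c → ∀ d, G.Adj c d → G.Adj d a →
      a ≠ c → b ≠ d → False)
    (h5 : ∀ a b : V, G.Adj a b → ∀ c, G.Adj b c → ∀ d, G.Adj c d → ∀ e, G.Adj d e →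
      G.Adj e a → a ≠ c → a ≠ d → b ≠ d → b ≠ e → c ≠ e → False) :
    6 ≤ G.egirth := by
  rw [SimpleGraph.le_egirth]
  intro a w hw
  by_contra hlt
  push_neg at hlt
  have hlen : w.length < 6 := by exact_mod_cast hlt
  have h3le : 3 ≤ w.length := hw.three_le_length
  have hnd := hw.support_nodup
  interval_cases h : w.length
  · obtain ⟨x, y, a1, a2, a3, hs⟩ := walk_len3 w h
    exact h3 a x a1 y a2 a3
  · obtain ⟨x, y, z, a1, a2, a3, a4, hs⟩ := walk_len4 w h
    rw [hs] at hnd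
    simp at hnd
    exact h4 a x a1 y a2 z a3 a4 (by tauto) (by tauto)
  · obtain ⟨x, y, z, p, a1, a2, a3, a4, a5, hs⟩ := walk_len5 w h
    rw [hs] at hnd
    simp at hnd
    exact h5 a x a1 y a2 z a3 p a4 a5 (by tauto) (by tauto) (by tauto) (by tauto) (by tauto)

lemma noC3 (h6 : 6 ≤ G.egirth) {a b c : V} (h1 : G.Adj a b) (h2 : G.Adj b c) (h3 : G.Adj c a) :
    False := by
  have hab := h1.ne
  have hbc := h2.ne
  have hca := h3.ne
  have hw : (Walk.cons h1 (Walk.cons h2 (Walk.cons h3 Walk.nil))).IsCycle := by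
    rw [Walk.isCycle_def]
    refine ⟨?_, by simp, ?_⟩
    · rw [Walk.isTrail_def]
      simp [Sym2.eq_iff]
      tauto
    · simp
      tauto
  have := SimpleGraph.le_egirth.mp h6 a _ hw
  norm_num [Walk.length_cons] at this

lemma noC4 (h6 : 6 ≤ G.egirth) {a b c d : V} (h1 : G.Adj a b) (h2 : G.Adj b c)
    (h3 : G.Adj c d) (h4 : G.Adj d a) (hac : a ≠ c) (hbd : b ≠ d) : False := by
  have hw : (Walk.cons h1 (Walk.cons h2 (Walk.cons h3 (Walk.cons h4 Walk.nil)))).IsCycle := by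
    rw [Walk.isCycle_def]
    refine ⟨?_, by simp, ?_⟩
    · rw [Walk.isTrail_def]
      simp [Sym2.eq_iff]
      have := h1.ne; have := h2.ne; have := h3.ne; have := h4.ne
      tauto
    · simp
      have := h1.ne; have := h2.ne; have := h3.ne; have := h4.ne
      tauto
  have := SimpleGraph.le_egirth.mp h6 a _ hw
  norm_num [Walk.length_cons] at this

lemma noC5 (h6 : 6 ≤ G.egirth) {a b c d e : V} (h1 : G.Adj a b) (h2 : G.Adj b c)
    (h3 : G.Adj c d) (h4 : G.Adj d e) (h5 : G.Adj e a) (hac : a ≠ c) (had : a ≠ d)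
    (hbd : b ≠ d) (hbe : b ≠ e) (hce : c ≠ e) : False := by
  have hw : (Walk.cons h1 (Walk.cons h2 (Walk.cons h3 (Walk.cons h4
      (Walk.cons h5 Walk.nil))))).IsCycle := by
    rw [Walk.isCycle_def]
    refine ⟨?_, by simp, ?_⟩
    · rw [Walk.isTrail_def]
      simp [Sym2.eq_iff]
      have := h1.ne; have := h2.ne; have := h3.ne; have := h4.ne; have := h5.ne
      tauto
    · simp
      have := h1.ne; have := h2.ne; have := h3.ne; have := h4.ne; have := h5.ne
      tauto
  have := SimpleGraph.le_egirth.mp h6 a _ hw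
  norm_num [Walk.length_cons] at this

lemma quad1 (d : ℕ) : 4*d ≤ (d*d - d) + 6 := by
  rcases Nat.lt_or_ge d 6 with h|h
  · interval_cases d <;> omega
  · have h2 : 6*d ≤ d*d := Nat.mul_le_mul h (le_refl d)
    set k := d*d
    omega

lemma quad2 (d : ℕ) (h : 4*d = (d*d - d) + 6) : d = 2 ∨ d = 3 := by
  rcases Nat.lt_or_ge d 6 with h'|h'
  · interval_cases d <;> omega
  · exfalso
    have h2 : 6*d ≤ d*d := Nat.mul_le_mul h' (le_refl d)
    set k := d*d
    omega

lemma card_le_of_girth (G : SimpleGraph (Fin 10)) [DecidableRel G.Adj] (h6 : 6 ≤ G.egirth) :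
    G.edgeFinset.card ≤ 14 := by
  set m := G.edgeFinset.card with hm
  set S : Finset ((_ : Fin 10) × Fin 10 × Fin 10) :=
    Finset.univ.sigma (fun v => (G.neighborFinset v).offDiag) with hS
  set T : Finset (Fin 10 × Fin 10) :=
    Finset.univ.offDiag.filter (fun p => ¬ G.Adj p.1 p.2) with hT
  have hmapsto : ∀ x ∈ S, x.2 ∈ T := by
    rintro ⟨v, p, q⟩ hx
    rw [hS, Finset.mem_sigma, Finset.mem_offDiag] at hx
    obtain ⟨-, hp, hq, hpq⟩ := hx
    rw [mem_neighborFinset] at hp hq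
    rw [hT, Finset.mem_filter, Finset.mem_offDiag]
    refine ⟨⟨Finset.mem_univ _, Finset.mem_univ _, hpq⟩, fun hadj => ?_⟩
    exact noC3 h6 hp hadj hq.symm
  have hinj : Set.InjOn (fun x : (_ : Fin 10) × Fin 10 × Fin 10 => x.2) S := by
    rintro ⟨v, p, q⟩ hx ⟨v', p', q'⟩ hy hxy
    simp only at hxy
    obtain ⟨hp, hq⟩ := Prod.mk.inj hxy
    subst hp; subst hq
    rw [hS] at hx hy
    simp only [Finset.mem_coe, Finset.mem_sigma, Finset.mem_offDiag] at hx hy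
    obtain ⟨-, hp1, hq1, hpq⟩ := hx
    obtain ⟨-, hp2, hq2, -⟩ := hy
    rw [mem_neighborFinset] at hp1 hq1 hp2 hq2
    by_cases hvv : v = v'
    · subst hvv; rfl
    · exact absurd (noC4 h6 hp1 (hp2.symm) hq2 (hq1.symm) hvv hpq) not_false
  have hST : S.card ≤ T.card := Finset.card_le_card_of_injOn _ hmapsto hinj
  have hcardS : S.card = ∑ v : Fin 10, (G.degree v * G.degree v - G.degree v) := by
    rw [hS, Finset.card_sigma]
    exact Finset.sum_congr rfl (fun v _ => by rw [Finset.offDiag_card]; rfl)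
  have hTA : T.card = 90 - (Finset.univ.offDiag.filter (fun p : Fin 10 × Fin 10 => G.Adj p.1 p.2)).card := by
    rw [hT, Finset.filter_not, Finset.card_sdiff_of_subset (Finset.filter_subset _ _), Finset.offDiag_card]
    simp [Finset.card_univ]
  have hAle : (Finset.univ.offDiag.filter (fun p : Fin 10 × Fin 10 => G.Adj p.1 p.2)).card ≤ 90 := by
    calc _ ≤ Finset.univ.offDiag.card := Finset.card_filter_le _ _
    _ = 90 := by rw [Finset.offDiag_card]; simp [Finset.card_univ]
  have hA : (Finset.univ.offDiag.filter (fun p : Fin 10 × Fin 10 => G.Adj p.1 p.2)).card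
      = ∑ v : Fin 10, G.degree v := by
    rw [Finset.card_eq_sum_card_fiberwise
      (f := fun p : Fin 10 × Fin 10 => p.1) (t := Finset.univ) (fun x _ => Finset.mem_univ _)]
    refine Finset.sum_congr rfl (fun v _ => ?_)
    rw [SimpleGraph.degree]
    apply Finset.card_bij (fun p _ => p.2)
    · rintro ⟨a, b⟩ hp
      simp only [Finset.mem_filter, Finset.mem_offDiag] at hp
      obtain ⟨⟨⟨-, -, hne⟩, hadj⟩, rfl⟩ := hp
      exact mem_neighborFinset _ _ _ |>.mpr hadj
    · rintro ⟨a, b⟩ hp ⟨a', b'⟩ hq h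
      simp only [Finset.mem_filter] at hp hq
      obtain ⟨-, rfl⟩ := hp
      obtain ⟨-, rfl⟩ := hq
      simpa [Prod.ext_iff] using h
    · intro b hb
      rw [mem_neighborFinset] at hb
      exact ⟨(v, b), by simp [Finset.mem_filter, Finset.mem_offDiag, hb, hb.ne], rfl⟩
  have hdeg : ∑ v : Fin 10, G.degree v = 2 * m := by
    rw [hm]; exact G.sum_degrees_eq_twice_card_edges
  -- main inequality
  have hsum1 : ∑ v : Fin 10, 4 * G.degree v ≤
      ∑ v : Fin 10, ((G.degree v * G.degree v - G.degree v) + 6) :=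
    Finset.sum_le_sum (fun v _ => quad1 _)
  rw [Finset.sum_add_distrib, Finset.sum_const, ← Finset.mul_sum] at hsum1
  simp only [Finset.card_univ, Fintype.card_fin, smul_eq_mul] at hsum1
  by_contra hgt
  push_neg at hgt
  have hm15 : m = 15 := by omega
  -- equality case
  have hQ : ∑ v : Fin 10, (G.degree v * G.degree v - G.degree v) = 60 := by omega
  have heqpt : ∀ v ∈ (Finset.univ : Finset (Fin 10)),
      4 * G.degree v = (G.degree v * G.degree v - G.degree v) + 6 := by
    rw [← Finset.sum_eq_sum_iff_of_le (fun v _ => quad1 _)]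
    rw [Finset.sum_add_distrib, Finset.sum_const, ← Finset.mul_sum]
    simp only [Finset.card_univ, Fintype.card_fin, smul_eq_mul]
    omega
  have hdeg23 : ∀ v : Fin 10, G.degree v = 2 ∨ G.degree v = 3 :=
    fun v => quad2 _ (heqpt v (Finset.mem_univ v))
  -- surjectivity
  have hTcard : T.card = 60 := by omega
  have hsurj := Finset.surj_on_of_inj_on_of_card_le
    (s := S) (t := T) (fun x _ => x.2) (fun a ha => hmapsto a ha)
    (fun a b ha hb h => hinj ha hb h) (by omega)
  -- get an edge
  have hmpos : 0 < m := by omega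
  obtain ⟨e, he⟩ := Finset.card_pos.mp hmpos
  induction e using Sym2.ind with
  | _ u v =>
  rw [SimpleGraph.mem_edgeFinset, SimpleGraph.mem_edgeSet] at he
  -- a neighbor of u other than v
  have hval : ∀ (x y : Fin 10), G.Adj x y → ∃ z, G.Adj x z ∧ z ≠ y := by
    intro x y hxy
    have hy : y ∈ G.neighborFinset x := (mem_neighborFinset _ _ _).mpr hxy
    have hcard : 1 ≤ ((G.neighborFinset x).erase y).card := by
      rw [Finset.card_erase_of_mem hy]
      have := hdeg23 x
      rw [SimpleGraph.degree] at this
      omega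
    obtain ⟨z, hz⟩ := Finset.card_pos.mp
      (show 0 < ((G.neighborFinset x).erase y).card by omega)
    rw [Finset.mem_erase, mem_neighborFinset] at hz
    exact ⟨z, hz.2, hz.1⟩
  obtain ⟨a, hua, hav⟩ := hval u v he
  obtain ⟨c, hvc, hcu⟩ := hval v u he.symm
  have hac : a ≠ c := by
    intro hh
    subst hh
    exact noC3 h6 he hvc hua.symm
  have hnadj : ¬ G.Adj a c := by
    intro hadj
    exact noC4 h6 hua hadj hvc.symm he.symm hcu.symm hav
  have hmemT : (a, c) ∈ T := by
    rw [hT, Finset.mem_filter, Finset.mem_offDiag]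
    exact ⟨⟨Finset.mem_univ _, Finset.mem_univ _, hac⟩, hnadj⟩
  obtain ⟨x, hxS, hxeq⟩ := hsurj (a, c) hmemT
  obtain ⟨w, p, q⟩ := x
  have hpa : p = a := by have := congrArg Prod.fst hxeq; simpa using this.symm
  have hqc : q = c := by have := congrArg Prod.snd hxeq; simpa using this.symm
  subst hpa; subst hqc
  rw [hS, Finset.mem_sigma, Finset.mem_offDiag] at hxS
  obtain ⟨-, hwa, hwc, -⟩ := hxS
  rw [mem_neighborFinset] at hwa hwc
  -- w adj a, w adj c
  have hwu : w ≠ u := by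
    intro hh; subst hh
    exact noC3 h6 he hvc hwc.symm
  have hwv : w ≠ v := by
    intro hh; subst hh
    exact noC3 h6 he hwa hua.symm
  exact noC5 h6 hua hwa.symm hwc hvc.symm he.symm hwu.symm hcu.symm hac hav hwv

def e1 : List (Fin 10 × Fin 10) := [(0,2), (0,3), (0,4), (1,4), (1,5), (2,6), (3,9), (5,6), (5,7), (7,8), (8,9)]

def G1 : SimpleGraph (Fin 10) where
  Adj u v := (u,v) ∈ e1 ∨ (v,u) ∈ e1
  symm := ⟨fun u v h => h.symm⟩
  loopless := by
    constructor
    intro u h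
    exact (by decide : ∀ u : Fin 10, ¬((u,u) ∈ e1 ∨ (u,u) ∈ e1)) u h

instance : DecidableRel G1.Adj :=
  fun u v => inferInstanceAs (Decidable ((u,v) ∈ e1 ∨ (v,u) ∈ e1))

def fZ1 : Fin 10 → ℤ × ℤ
  | 0 => (7, -13)
  | 1 => (-15, 5)
  | 2 => (16, 3)
  | 3 => (9, -10)
  | 4 => (-12, -20)
  | 5 => (-17, 15)
  | 6 => (-11, 5)
  | 7 => (-15, 16)
  | 8 => (19, 3)
  | 9 => (12, -10)

noncomputable def f1 : Fin 10 → ℝ × ℝ := fun i => (((fZ1 i).1 : ℝ), ((fZ1 i).2 : ℝ))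

lemma fZ1inj : Function.Injective fZ1 := by decide

lemma G1h3 : ∀ a b : Fin 10, G1.Adj a b → ∀ c, G1.Adj b c → G1.Adj c a → False := by decide
lemma G1h4 : ∀ a b : Fin 10, G1.Adj a b → ∀ c, G1.Adj b c → ∀ d, G1.Adj c d →
    G1.Adj d a → a ≠ c → b ≠ d → False := by decide
set_option synthInstance.maxHeartbeats 2000000 in
set_option synthInstance.maxSize 2000 in
set_option maxHeartbeats 4000000 in
lemma G1h5 : ∀ a b : Fin 10, G1.Adj a b → ∀ c, G1.Adj b c → ∀ d, G1.Adj c d →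
    ∀ e, G1.Adj d e → G1.Adj e a → a ≠ c → a ≠ d → b ≠ d → b ≠ e → c ≠ e → False := by decide
lemma G1girth : 6 ≤ G1.egirth := egirth_ge_six G1h3 G1h4 G1h5

lemma G1avoid : ∀ u v : Fin 10, G1.Adj u v → ∀ w : Fin 10, w ≠ u → w ≠ v →
    ((fZ1 v).1 - (fZ1 u).1) * ((fZ1 w).2 - (fZ1 u).2) -
      ((fZ1 v).2 - (fZ1 u).2) * ((fZ1 w).1 - (fZ1 u).1) ≠ 0 := by decide

def tbl1 : List (((Fin 10 × Fin 10) × (Fin 10 × Fin 10)) × (ℤ × ℤ × ℤ)) := [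
  (((0,2),(0,3)), (1063,-619,15488)),
  (((0,2),(0,4)), (-4553,2540,-64891)),
  (((0,2),(1,4)), (-16,9,-229)),
  (((0,2),(1,5)), (-16,9,-229)),
  (((0,2),(2,6)), (-3383,1924,-48356)),
  (((0,2),(3,9)), (16,-9,229)),
  (((0,2),(5,6)), (-16,9,-229)),
  (((0,2),(5,7)), (-16,9,-229)),
  (((0,2),(7,8)), (13,31,301)),
  (((0,2),(8,9)), (16,-9,229)),
  (((0,3),(0,4)), (-182,117,-2795)),
  (((0,3),(1,4)), (-3,2,-47)),
  (((0,3),(1,5)), (-3,2,-47)),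
  (((0,3),(2,6)), (-3,2,-47)),
  (((0,3),(3,9)), (23,-11,317)),
  (((0,3),(5,6)), (-3,2,-47)),
  (((0,3),(5,7)), (-3,2,-47)),
  (((0,3),(7,8)), (26,24,-6)),
  (((0,3),(8,9)), (3,-2,47)),
  (((0,4),(1,4)), (-852,2254,-34856)),
  (((0,4),(1,5)), (-7,19,-296)),
  (((0,4),(2,6)), (-7,19,-296)),
  (((0,4),(3,9)), (-7,19,-296)),
  (((0,4),(5,6)), (-7,19,-296)),
  (((0,4),(5,7)), (-7,19,-296)),
  (((0,4),(7,8)), (-7,19,-296)),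
  (((0,4),(8,9)), (-7,19,-296)),
  (((1,4),(1,5)), (-6428,-746,92690)),
  (((1,4),(2,6)), (25,3,-360)),
  (((1,4),(3,9)), (25,3,-360)),
  (((1,4),(5,6)), (10,2,-140)),
  (((1,4),(5,7)), (10,2,-140)),
  (((1,4),(7,8)), (25,3,-360)),
  (((1,4),(8,9)), (25,3,-360)),
  (((1,5),(2,6)), (10,2,-140)),
  (((1,5),(3,9)), (10,2,-140)),
  (((1,5),(5,6)), (1128,236,-15636)),
  (((1,5),(5,7)), (68,24,-796)),
  (((1,5),(7,8)), (10,2,-140)),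
  (((1,5),(8,9)), (10,2,-140)),
  (((2,6),(3,9)), (-2,-27,-113)),
  (((2,6),(5,6)), (339,4943,20986)),
  (((2,6),(5,7)), (2,27,113)),
  (((2,6),(7,8)), (2,27,113)),
  (((2,6),(8,9)), (0,-3,-9)),
  (((3,9),(5,6)), (0,3,-30)),
  (((3,9),(5,7)), (0,3,-30)),
  (((3,9),(7,8)), (0,3,-30)),
  (((3,9),(8,9)), (3,66,-624)),
  (((5,6),(5,7)), (24,28,12)),
  (((5,6),(7,8)), (10,6,-80)),
  (((5,6),(8,9)), (10,6,-80)),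
  (((5,7),(7,8)), (58,-111,-2646)),
  (((5,7),(8,9)), (1,-2,-47)),
  (((7,8),(8,9)), (-876,-2393,-23823))]

set_option synthInstance.maxHeartbeats 2000000 in
set_option synthInstance.maxSize 2000 in
set_option maxHeartbeats 4000000 in
lemma G1crit : ∀ u v : Fin 10, G1.Adj u v → ∀ u' v', G1.Adj u' v' → s(u,v) ≠ s(u',v') →
    crit (coefLookup tbl1 u v u' v') (fZ1 u) (fZ1 v) (fZ1 u') (fZ1 v') := by decide

lemma G1planar : G1.IsPlanar := by
  refine ⟨f1, fun u v _ => seg (f1 u) (f1 v),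
    inj_cast fZ1inj, fun u v h => seg_inj (fun he => h.ne (inj_cast fZ1inj he)), ?_, ?_⟩
  · intro u v h t ht0 ht1 w
    by_cases hw : w = u
    · subst hw; exact seg_ne_src (fun he => h.ne (inj_cast fZ1inj he)) ht0
    · by_cases hw' : w = v
      · subst hw'; exact seg_ne_tgt (fun he => h.ne (inj_cast fZ1inj he)) ht1
      · exact avoid_int (fZ1 u) (fZ1 v) (fZ1 w) (G1avoid u v h w hw hw') t
  · intro u v h u' v' h' hne s t hs0 hs1 ht0 ht1
    exact segDisj_of_crit (G1crit u v h u' v' h' hne) s t hs0 hs1 ht0 ht1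

def e2 : List (Fin 10 × Fin 10) := [(0,5), (0,7), (1,2), (1,6), (2,5), (2,8), (3,4), (3,8), (4,6), (4,9), (5,9), (6,7)]

def G2 : SimpleGraph (Fin 10) where
  Adj u v := (u,v) ∈ e2 ∨ (v,u) ∈ e2
  symm := ⟨fun u v h => h.symm⟩
  loopless := by
    constructor
    intro u h
    exact (by decide : ∀ u : Fin 10, ¬((u,u) ∈ e2 ∨ (u,u) ∈ e2)) u h

instance : DecidableRel G2.Adj :=
  fun u v => inferInstanceAs (Decidable ((u,v) ∈ e2 ∨ (v,u) ∈ e2))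

def fZ2 : Fin 10 → ℤ × ℤ
  | 0 => (-16, -2)
  | 1 => (-4, 4)
  | 2 => (-16, 14)
  | 3 => (14, -1)
  | 4 => (1, -18)
  | 5 => (-20, -20)
  | 6 => (4, -4)
  | 7 => (-14, -5)
  | 8 => (12, -1)
  | 9 => (-10, -16)

noncomputable def f2 : Fin 10 → ℝ × ℝ := fun i => (((fZ2 i).1 : ℝ), ((fZ2 i).2 : ℝ))

lemma fZ2inj : Function.Injective fZ2 := by decide

lemma G2h3 : ∀ a b : Fin 10, G2.Adj a b → ∀ c, G2.Adj b c → G2.Adj c a → False := by decide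
lemma G2h4 : ∀ a b : Fin 10, G2.Adj a b → ∀ c, G2.Adj b c → ∀ d, G2.Adj c d →
    G2.Adj d a → a ≠ c → b ≠ d → False := by decide
set_option synthInstance.maxHeartbeats 2000000 in
set_option synthInstance.maxSize 2000 in
set_option maxHeartbeats 4000000 in
lemma G2h5 : ∀ a b : Fin 10, G2.Adj a b → ∀ c, G2.Adj b c → ∀ d, G2.Adj c d →
    ∀ e, G2.Adj d e → G2.Adj e a → a ≠ c → a ≠ d → b ≠ d → b ≠ e → c ≠ e → False := by decide
lemma G2girth : 6 ≤ G2.egirth := egirth_ge_six G2h3 G2h4 G2h5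

lemma G2avoid : ∀ u v : Fin 10, G2.Adj u v → ∀ w : Fin 10, w ≠ u → w ≠ v →
    ((fZ2 v).1 - (fZ2 u).1) * ((fZ2 w).2 - (fZ2 u).2) -
      ((fZ2 v).2 - (fZ2 u).2) * ((fZ2 w).1 - (fZ2 u).1) ≠ 0 := by decide

def tbl2 : List (((Fin 10 × Fin 10) × (Fin 10 × Fin 10)) × (ℤ × ℤ × ℤ)) := [
  (((0,5),(0,7)), (850,-170,-13260)),
  (((0,5),(1,2)), (-6,12,72)),
  (((0,5),(1,6)), (18,-4,-280)),
  (((0,5),(2,5)), (-11326,2498,176560)),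
  (((0,5),(2,8)), (16,0,-256)),
  (((0,5),(3,4)), (18,-4,-280)),
  (((0,5),(3,8)), (18,-4,-280)),
  (((0,5),(4,6)), (18,-4,-280)),
  (((0,5),(4,9)), (18,-4,-280)),
  (((0,5),(5,9)), (2030,-470,-31200)),
  (((0,5),(6,7)), (18,-4,-280)),
  (((0,7),(1,2)), (3,2,-52)),
  (((0,7),(1,6)), (3,2,-52)),
  (((0,7),(2,5)), (-16,0,256)),
  (((0,7),(2,8)), (3,2,-52)),
  (((0,7),(3,4)), (3,2,-52)),
  (((0,7),(3,8)), (3,2,-52)),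
  (((0,7),(4,6)), (3,2,-52)),
  (((0,7),(4,9)), (-13,-15,257)),
  (((0,7),(5,9)), (-3,-2,52)),
  (((0,7),(6,7)), (104,65,-1781)),
  (((1,2),(1,6)), (-1758,-2134,-1504)),
  (((1,2),(2,5)), (-2942,-3506,-2012)),
  (((1,2),(2,8)), (4858,5854,4228)),
  (((1,2),(3,4)), (-5,-18,-52)),
  (((1,2),(3,8)), (10,12,8)),
  (((1,2),(4,6)), (-10,-12,-8)),
  (((1,2),(4,9)), (-10,-12,-8)),
  (((1,2),(5,9)), (-10,-12,-8)),
  (((1,2),(6,7)), (-10,-12,-8)),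
  (((1,6),(2,5)), (-8,-8,0)),
  (((1,6),(2,8)), (10,12,8)),
  (((1,6),(3,4)), (3,-10,52)),
  (((1,6),(3,8)), (8,8,0)),
  (((1,6),(4,6)), (-704,-720,64)),
  (((1,6),(4,9)), (-8,-8,0)),
  (((1,6),(5,9)), (-8,-8,0)),
  (((1,6),(6,7)), (-1088,-1104,64)),
  (((2,5),(2,8)), (13570,-1562,-238988)),
  (((2,5),(3,4)), (34,-4,-600)),
  (((2,5),(3,8)), (34,-4,-600)),
  (((2,5),(4,6)), (34,-4,-600)),
  (((2,5),(4,9)), (34,-4,-600)),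
  (((2,5),(5,9)), (6014,-742,-105440)),
  (((2,5),(6,7)), (34,-4,-600)),
  (((2,8),(3,4)), (0,-2,2)),
  (((2,8),(3,8)), (883,1581,9015)),
  (((2,8),(4,6)), (-15,-28,-152)),
  (((2,8),(4,9)), (-15,-28,-152)),
  (((2,8),(5,9)), (-15,-28,-152)),
  (((2,8),(6,7)), (-15,-28,-152)),
  (((3,4),(3,8)), (-446,368,-6612)),
  (((3,4),(4,6)), (-4739,3597,-69485)),
  (((3,4),(4,9)), (-1883,1413,-27317)),
  (((3,4),(5,9)), (-17,13,-251)),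
  (((3,4),(6,7)), (-17,13,-251)),
  (((3,8),(4,6)), (0,-2,2)),
  (((3,8),(4,9)), (0,-2,2)),
  (((3,8),(5,9)), (0,-2,2)),
  (((3,8),(6,7)), (0,-2,2)),
  (((4,6),(4,9)), (-87,4,-159)),
  (((4,6),(5,9)), (-14,3,-68)),
  (((4,6),(6,7)), (-963,221,-4736)),
  (((4,9),(5,9)), (-217,-1131,20266)),
  (((4,9),(6,7)), (2,11,-196)),
  (((5,9),(6,7)), (-4,10,-120))]

set_option synthInstance.maxHeartbeats 2000000 in
set_option synthInstance.maxSize 2000 in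
set_option maxHeartbeats 4000000 in
lemma G2crit : ∀ u v : Fin 10, G2.Adj u v → ∀ u' v', G2.Adj u' v' → s(u,v) ≠ s(u',v') →
    crit (coefLookup tbl2 u v u' v') (fZ2 u) (fZ2 v) (fZ2 u') (fZ2 v') := by decide

lemma G2planar : G2.IsPlanar := by
  refine ⟨f2, fun u v _ => seg (f2 u) (f2 v),
    inj_cast fZ2inj, fun u v h => seg_inj (fun he => h.ne (inj_cast fZ2inj he)), ?_, ?_⟩
  · intro u v h t ht0 ht1 w
    by_cases hw : w = u
    · subst hw; exact seg_ne_src (fun he => h.ne (inj_cast fZ2inj he)) ht0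
    · by_cases hw' : w = v
      · subst hw'; exact seg_ne_tgt (fun he => h.ne (inj_cast fZ2inj he)) ht1
      · exact avoid_int (fZ2 u) (fZ2 v) (fZ2 w) (G2avoid u v h w hw hw') t
  · intro u v h u' v' h' hne s t hs0 hs1 ht0 ht1
    exact segDisj_of_crit (G2crit u v h u' v' h' hne) s t hs0 hs1 ht0 ht1

def e3 : List (Fin 10 × Fin 10) := [(0,9), (1,3), (1,7), (1,8), (2,4), (2,7), (2,9), (3,5), (4,5), (6,8), (6,9)]

def G3 : SimpleGraph (Fin 10) where
  Adj u v := (u,v) ∈ e3 ∨ (v,u) ∈ e3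
  symm := ⟨fun u v h => h.symm⟩
  loopless := by
    constructor
    intro u h
    exact (by decide : ∀ u : Fin 10, ¬((u,u) ∈ e3 ∨ (u,u) ∈ e3)) u h

instance : DecidableRel G3.Adj :=
  fun u v => inferInstanceAs (Decidable ((u,v) ∈ e3 ∨ (v,u) ∈ e3))

def fZ3 : Fin 10 → ℤ × ℤ
  | 0 => (13, -18)
  | 1 => (-19, 0)
  | 2 => (8, -3)
  | 3 => (-3, 14)
  | 4 => (12, 9)
  | 5 => (-2, 13)
  | 6 => (14, 20)
  | 7 => (10, -8)
  | 8 => (-7, 17)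
  | 9 => (20, 10)

noncomputable def f3 : Fin 10 → ℝ × ℝ := fun i => (((fZ3 i).1 : ℝ), ((fZ3 i).2 : ℝ))

lemma fZ3inj : Function.Injective fZ3 := by decide

lemma G3h3 : ∀ a b : Fin 10, G3.Adj a b → ∀ c, G3.Adj b c → G3.Adj c a → False := by decide
lemma G3h4 : ∀ a b : Fin 10, G3.Adj a b → ∀ c, G3.Adj b c → ∀ d, G3.Adj c d →
    G3.Adj d a → a ≠ c → b ≠ d → False := by decide
set_option synthInstance.maxHeartbeats 2000000 in
set_option synthInstance.maxSize 2000 in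
set_option maxHeartbeats 4000000 in
lemma G3h5 : ∀ a b : Fin 10, G3.Adj a b → ∀ c, G3.Adj b c → ∀ d, G3.Adj c d →
    ∀ e, G3.Adj d e → G3.Adj e a → a ≠ c → a ≠ d → b ≠ d → b ≠ e → c ≠ e → False := by decide
lemma G3girth : 6 ≤ G3.egirth := egirth_ge_six G3h3 G3h4 G3h5

lemma G3avoid : ∀ u v : Fin 10, G3.Adj u v → ∀ w : Fin 10, w ≠ u → w ≠ v →
    ((fZ3 v).1 - (fZ3 u).1) * ((fZ3 w).2 - (fZ3 u).2) -
      ((fZ3 v).2 - (fZ3 u).2) * ((fZ3 w).1 - (fZ3 u).1) ≠ 0 := by decide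

def tbl3 : List (((Fin 10 × Fin 10) × (Fin 10 × Fin 10)) × (ℤ × ℤ × ℤ)) := [
  (((0,9),(1,3)), (-28,7,-490)),
  (((0,9),(1,7)), (-28,7,-490)),
  (((0,9),(1,8)), (-28,7,-490)),
  (((0,9),(2,4)), (-28,7,-490)),
  (((0,9),(2,7)), (-28,7,-490)),
  (((0,9),(2,9)), (-12565,3171,-219590)),
  (((0,9),(3,5)), (-28,7,-490)),
  (((0,9),(4,5)), (-28,7,-490)),
  (((0,9),(6,8)), (-28,7,-490)),
  (((0,9),(6,9)), (-6685,1701,-116690)),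
  (((1,3),(1,7)), (4926,-5662,-93594)),
  (((1,3),(1,8)), (-6050,6882,114950)),
  (((1,3),(2,4)), (14,-16,-266)),
  (((1,3),(2,7)), (14,-16,-266)),
  (((1,3),(2,9)), (14,-16,-266)),
  (((1,3),(3,5)), (58,-34,-650)),
  (((1,3),(4,5)), (14,-16,-266)),
  (((1,3),(6,8)), (-6,17,256)),
  (((1,3),(6,9)), (14,-16,-266)),
  (((1,7),(1,8)), (1675,6185,-31825)),
  (((1,7),(2,4)), (8,29,-152)),
  (((1,7),(2,7)), (821,2863,-14694)),
  (((1,7),(2,9)), (8,29,-152)),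
  (((1,7),(3,5)), (8,29,-152)),
  (((1,7),(4,5)), (8,29,-152)),
  (((1,7),(6,8)), (8,29,-152)),
  (((1,7),(6,9)), (8,29,-152)),
  (((1,8),(2,4)), (17,-12,-323)),
  (((1,8),(2,7)), (17,-12,-323)),
  (((1,8),(2,9)), (17,-12,-323)),
  (((1,8),(3,5)), (17,-12,-323)),
  (((1,8),(4,5)), (17,-12,-323)),
  (((1,8),(6,8)), (5180,-3631,-97987)),
  (((1,8),(6,9)), (17,-12,-323)),
  (((2,4),(2,7)), (632,-224,5728)),
  (((2,4),(2,9)), (2456,-832,22144)),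
  (((2,4),(3,5)), (-12,4,-108)),
  (((2,4),(4,5)), (-104,48,-816)),
  (((2,4),(6,8)), (-12,4,-108)),
  (((2,4),(6,9)), (11,-2,114)),
  (((2,7),(2,9)), (208,89,1397)),
  (((2,7),(3,5)), (-5,-2,-34)),
  (((2,7),(4,5)), (-12,4,-108)),
  (((2,7),(6,8)), (-23,6,-202)),
  (((2,7),(6,9)), (5,2,34)),
  (((2,9),(3,5)), (-13,12,-140)),
  (((2,9),(4,5)), (-13,12,-140)),
  (((2,9),(6,8)), (-13,12,-140)),
  (((2,9),(6,9)), (-755,721,-7890)),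
  (((3,5),(4,5)), (20,18,194)),
  (((3,5),(6,8)), (-6,17,256)),
  (((3,5),(6,9)), (1,1,11)),
  (((4,5),(6,8)), (4,14,174)),
  (((4,5),(6,9)), (4,14,174)),
  (((6,8),(6,9)), (312,-2034,-36312))]

set_option synthInstance.maxHeartbeats 2000000 in
set_option synthInstance.maxSize 2000 in
set_option maxHeartbeats 4000000 in
lemma G3crit : ∀ u v : Fin 10, G3.Adj u v → ∀ u' v', G3.Adj u' v' → s(u,v) ≠ s(u',v') →
    crit (coefLookup tbl3 u v u' v') (fZ3 u) (fZ3 v) (fZ3 u') (fZ3 v') := by decide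

lemma G3planar : G3.IsPlanar := by
  refine ⟨f3, fun u v _ => seg (f3 u) (f3 v),
    inj_cast fZ3inj, fun u v h => seg_inj (fun he => h.ne (inj_cast fZ3inj he)), ?_, ?_⟩
  · intro u v h t ht0 ht1 w
    by_cases hw : w = u
    · subst hw; exact seg_ne_src (fun he => h.ne (inj_cast fZ3inj he)) ht0
    · by_cases hw' : w = v
      · subst hw'; exact seg_ne_tgt (fun he => h.ne (inj_cast fZ3inj he)) ht1
      · exact avoid_int (fZ3 u) (fZ3 v) (fZ3 w) (G3avoid u v h w hw hw') t
  · intro u v h u' v' h' hne s t hs0 hs1 ht0 ht1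
    exact segDisj_of_crit (G3crit u v h u' v' h' hne) s t hs0 hs1 ht0 ht1

def e4 : List (Fin 10 × Fin 10) := [(0,1), (0,6), (0,8), (1,9), (2,3), (3,6), (3,7), (4,7), (4,8), (5,8), (7,9)]

def G4 : SimpleGraph (Fin 10) where
  Adj u v := (u,v) ∈ e4 ∨ (v,u) ∈ e4
  symm := ⟨fun u v h => h.symm⟩
  loopless := by
    constructor
    intro u h
    exact (by decide : ∀ u : Fin 10, ¬((u,u) ∈ e4 ∨ (u,u) ∈ e4)) u h

instance : DecidableRel G4.Adj :=
  fun u v => inferInstanceAs (Decidable ((u,v) ∈ e4 ∨ (v,u) ∈ e4))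

def fZ4 : Fin 10 → ℤ × ℤ
  | 0 => (-18, 16)
  | 1 => (-11, 6)
  | 2 => (-13, 5)
  | 3 => (-15, -9)
  | 4 => (6, 19)
  | 5 => (-13, 12)
  | 6 => (-18, -16)
  | 7 => (14, -14)
  | 8 => (-5, 11)
  | 9 => (4, -3)

noncomputable def f4 : Fin 10 → ℝ × ℝ := fun i => (((fZ4 i).1 : ℝ), ((fZ4 i).2 : ℝ))

lemma fZ4inj : Function.Injective fZ4 := by decide

lemma G4h3 : ∀ a b : Fin 10, G4.Adj a b → ∀ c, G4.Adj b c → G4.Adj c a → False := by decide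
lemma G4h4 : ∀ a b : Fin 10, G4.Adj a b → ∀ c, G4.Adj b c → ∀ d, G4.Adj c d →
    G4.Adj d a → a ≠ c → b ≠ d → False := by decide
set_option synthInstance.maxHeartbeats 2000000 in
set_option synthInstance.maxSize 2000 in
set_option maxHeartbeats 4000000 in
lemma G4h5 : ∀ a b : Fin 10, G4.Adj a b → ∀ c, G4.Adj b c → ∀ d, G4.Adj c d →
    ∀ e, G4.Adj d e → G4.Adj e a → a ≠ c → a ≠ d → b ≠ d → b ≠ e → c ≠ e → False := by decide
lemma G4girth : 6 ≤ G4.egirth := egirth_ge_six G4h3 G4h4 G4h5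

lemma G4avoid : ∀ u v : Fin 10, G4.Adj u v → ∀ w : Fin 10, w ≠ u → w ≠ v →
    ((fZ4 v).1 - (fZ4 u).1) * ((fZ4 w).2 - (fZ4 u).2) -
      ((fZ4 v).2 - (fZ4 u).2) * ((fZ4 w).1 - (fZ4 u).1) ≠ 0 := by decide

def tbl4 : List (((Fin 10 × Fin 10) × (Fin 10 × Fin 10)) × (ℤ × ℤ × ℤ)) := [
  (((0,1),(0,6)), (-3217,-2237,22114)),
  (((0,1),(0,8)), (1413,1004,-9370)),
  (((0,1),(1,9)), (1967,1362,-13465)),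
  (((0,1),(2,3)), (-10,-7,68)),
  (((0,1),(3,6)), (-10,-7,68)),
  (((0,1),(3,7)), (15,-4,-189)),
  (((0,1),(4,7)), (10,7,-68)),
  (((0,1),(4,8)), (10,7,-68)),
  (((0,1),(5,8)), (10,7,-68)),
  (((0,1),(7,9)), (10,7,-68)),
  (((0,6),(0,8)), (5152,32,-92224)),
  (((0,6),(1,9)), (32,0,-576)),
  (((0,6),(2,3)), (32,0,-576)),
  (((0,6),(3,6)), (7200,-32,-129088)),
  (((0,6),(3,7)), (32,0,-576)),
  (((0,6),(4,7)), (32,0,-576)),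
  (((0,6),(4,8)), (32,0,-576)),
  (((0,6),(5,8)), (32,0,-576)),
  (((0,6),(7,9)), (32,0,-576)),
  (((0,8),(1,9)), (-5,-13,-118)),
  (((0,8),(2,3)), (-5,-13,-118)),
  (((0,8),(3,6)), (-5,-13,-118)),
  (((0,8),(3,7)), (-5,-13,-118)),
  (((0,8),(4,7)), (8,-11,-161)),
  (((0,8),(4,8)), (533,1347,12152)),
  (((0,8),(5,8)), (-537,-1435,-13100)),
  (((0,8),(7,9)), (-5,-13,-118)),
  (((1,9),(2,3)), (-9,-15,9)),
  (((1,9),(3,6)), (-9,-15,9)),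
  (((1,9),(3,7)), (-9,-15,9)),
  (((1,9),(4,7)), (22,-2,94)),
  (((1,9),(4,8)), (9,15,-9)),
  (((1,9),(5,8)), (9,15,-9)),
  (((1,9),(7,9)), (-2235,-3759,2337)),
  (((2,3),(3,6)), (-1472,196,20316)),
  (((2,3),(3,7)), (180,-40,-2340)),
  (((2,3),(4,7)), (14,-2,-192)),
  (((2,3),(4,8)), (14,-2,-192)),
  (((2,3),(5,8)), (7,0,-91)),
  (((2,3),(7,9)), (14,-2,-192)),
  (((3,6),(3,7)), (374,-152,-4242)),
  (((3,6),(4,7)), (7,-3,-78)),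
  (((3,6),(4,8)), (7,-3,-78)),
  (((3,6),(5,8)), (21,-2,-297)),
  (((3,6),(7,9)), (7,-3,-78)),
  (((3,7),(4,7)), (2019,11537,-133252)),
  (((3,7),(4,8)), (5,29,-336)),
  (((3,7),(5,8)), (5,29,-336)),
  (((3,7),(7,9)), (1759,10029,-115780)),
  (((4,7),(4,8)), (-5849,-1383,-61371)),
  (((4,7),(5,8)), (-33,-8,-350)),
  (((4,7),(7,9)), (-14644,-3585,-154826)),
  (((4,8),(5,8)), (-659,883,13008)),
  (((4,8),(7,9)), (8,-11,-161)),
  (((5,8),(7,9)), (-1,-8,-83))]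

set_option synthInstance.maxHeartbeats 2000000 in
set_option synthInstance.maxSize 2000 in
set_option maxHeartbeats 4000000 in
lemma G4crit : ∀ u v : Fin 10, G4.Adj u v → ∀ u' v', G4.Adj u' v' → s(u,v) ≠ s(u',v') →
    crit (coefLookup tbl4 u v u' v') (fZ4 u) (fZ4 v) (fZ4 u') (fZ4 v') := by decide

lemma G4planar : G4.IsPlanar := by
  refine ⟨f4, fun u v _ => seg (f4 u) (f4 v),
    inj_cast fZ4inj, fun u v h => seg_inj (fun he => h.ne (inj_cast fZ4inj he)), ?_, ?_⟩
  · intro u v h t ht0 ht1 w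
    by_cases hw : w = u
    · subst hw; exact seg_ne_src (fun he => h.ne (inj_cast fZ4inj he)) ht0
    · by_cases hw' : w = v
      · subst hw'; exact seg_ne_tgt (fun he => h.ne (inj_cast fZ4inj he)) ht1
      · exact avoid_int (fZ4 u) (fZ4 v) (fZ4 w) (G4avoid u v h w hw hw') t
  · intro u v h u' v' h' hne s t hs0 hs1 ht0 ht1
    exact segDisj_of_crit (G4crit u v h u' v' h' hne) s t hs0 hs1 ht0 ht1

noncomputable def HH : Fin 4 → SimpleGraph (Fin 10) := ![G1, G2, G3, G4]

lemma Hcover : ∀ u v : Fin 10, u ≠ v → (G1.Adj u v ∨ G2.Adj u v ∨ G3.Adj u v ∨ G4.Adj u v) := by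
  decide

lemma Hunion : (⨆ i, HH i) = completeGraph (Fin 10) := by
  rw [completeGraph_eq_top]
  ext u v
  rw [SimpleGraph.iSup_adj]
  simp only [SimpleGraph.top_adj]
  constructor
  · rintro ⟨i, hi⟩
    exact hi.ne
  · intro hne
    rcases Hcover u v hne with h|h|h|h
    exacts [⟨0, h⟩, ⟨1, h⟩, ⟨2, h⟩, ⟨3, h⟩]

lemma Hplanar : ∀ i, (HH i).IsPlanar := by
  intro i
  fin_cases i
  exacts [G1planar, G2planar, G3planar, G4planar]

lemma Hgirth : ∀ i, (6 : ℕ∞) ≤ (HH i).egirth := by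
  intro i
  fin_cases i
  exacts [G1girth, G2girth, G3girth, G4girth]

theorem girthThickness_six_K10 :
    girthThickness 6 (completeGraph (Fin 10)) = 4 ∧
    ∃ H : Fin 4 → SimpleGraph (Fin 10),
      (∀ i, (H i).IsPlanar) ∧ (∀ i, 6 ≤ (H i).egirth) ∧
      (⨆ i, H i) = completeGraph (Fin 10) := by
  have hmem : 4 ∈ {m : ℕ | ∃ H : Fin m → SimpleGraph (Fin 10),
      (∀ i, (H i).IsPlanar) ∧ (∀ i, (6:ℕ∞) ≤ (H i).egirth) ∧
      (⨆ i, H i) = completeGraph (Fin 10)} := ⟨HH, Hplanar, Hgirth, Hunion⟩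
  constructor
  · rw [girthThickness]
    apply le_antisymm
    · exact Nat.sInf_le hmem
    · apply le_csInf ⟨4, hmem⟩
      rintro m ⟨H, hp, hg, hu⟩
      by_contra hlt
      push_neg at hlt
      classical
      have hcard : ∀ i, (H i).edgeFinset.card ≤ 14 := fun i => card_le_of_girth _ (hg i)
      have h45 : (completeGraph (Fin 10)).edgeFinset.card = 45 := by
        simp only [completeGraph_eq_top]
        have h0 := SimpleGraph.card_edgeFinset_top_eq_card_choose_two (V := Fin 10)
        rw [Fintype.card_fin] at h0
        have h1 : Nat.choose 10 2 = 45 := by decide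
        rw [h1] at h0
        convert h0 using 2
      have hsub : (completeGraph (Fin 10)).edgeFinset ⊆
          Finset.univ.biUnion (fun i => (H i).edgeFinset) := by
        intro e he
        induction e using Sym2.ind with
        | _ u v =>
          rw [Finset.mem_biUnion]
          rw [SimpleGraph.mem_edgeFinset, ← hu, SimpleGraph.mem_edgeSet,
            SimpleGraph.iSup_adj] at he
          obtain ⟨i, hi⟩ := he
          exact ⟨i, Finset.mem_univ _, SimpleGraph.mem_edgeFinset.mpr hi⟩
      have hchain : 45 ≤ 14 * m := by
        calc 45 = (completeGraph (Fin 10)).edgeFinset.card := h45.symm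
        _ ≤ (Finset.univ.biUnion (fun i => (H i).edgeFinset)).card := Finset.card_le_card hsub
        _ ≤ ∑ i : Fin m, (H i).edgeFinset.card := Finset.card_biUnion_le
        _ ≤ ∑ _i : Fin m, 14 := Finset.sum_le_sum (fun i _ => hcard i)
        _ = 14 * m := by simp [Finset.sum_const, Finset.card_univ, Nat.mul_comm]
      omega
  · exact ⟨HH, Hplanar, Hgirth, Hunion⟩
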